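/- Set f(z) = log(z/(1−z)) for 0 < z < 1, f(1) = ∞, f(0) = −∞, and let φ(z) = log(1+exp(−z)) be the logistic loss. Let K ∈ ℕ with K ≥ 6, let m: ℝ^{d·l} → [0,1] and let ḡ: ℝ^{d_1×d_2} → ℝ satisfy ‖ḡ − m‖_{∞,[0,1]^{d_1×d_2}} ≤ ε for some 0 ≤ ε ≤ 1/K. Then there exists a ReLU neural network f̄: ℝ → ℝ with one hidden layer of 3K+9 neurons, all of whose weights are bounded in absolute value by K, such that for every network f̃: ℝ → ℝ with the same structure whose weights differ in supremum norm by at most 0 ≤ ε̄ ≤ 1 from those of f̄, the composition f̃∘ḡ satisfies ‖f̃∘ḡ‖_{∞,[0,1]^{d_1×d_2}} ≤ 132·K²·ε̄ + log K, and sup_{x ∈ [0,1]^{d_1×d_2}} ( |m(x)·(φ(f̃(ḡ(x))) − φ(f(m(x))))| + |(1−m(x))·(φ(−f̃(ḡ(x))) − φ(−f(m(x))))| ) ≤ c_{16}·(log K/K + ε) + 132·K²·ε̄. -/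

import Mathlib

open Finset

noncomputable section

/-- The logistic loss `φ(z) = log (1 + exp (-z))`. -/
def logloss (z : ℝ) : ℝ := Real.log (1 + Real.exp (-z))

/-- Membership of an image in `[0,1]^{d₁ × d₂}`. -/
def cube (d₁ d₂ : ℕ) (x : ℕ → ℕ → ℝ) : Prop :=
  ∀ i ∈ Finset.Icc 1 d₁, ∀ j ∈ Finset.Icc 1 d₂, x i j ∈ Set.Icc (0 : ℝ) 1

/-- One-hidden-layer ReLU network with `r` neurons:
`z ↦ w₀^{(1)} + ∑ᵢ wᵢ^{(1)} σ(w_{i,1}^{(0)} z + w_{i,0}^{(0)})`. -/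
def shallowEval (r : ℕ) (w1 wa wb : ℕ → ℝ) (z : ℝ) : ℝ :=
  w1 0 + ∑ i ∈ Finset.Icc 1 r, w1 i * max 0 (wa i * z + wb i)


namespace S11


def sg (t : ℝ) : ℝ := (1 + Real.exp (-t))⁻¹


lemma sg_pos (t : ℝ) : 0 < sg t := by unfold sg; positivity

lemma sg_mono {a b : ℝ} (h : a ≤ b) : sg a ≤ sg b := by
  unfold sg
  have h1 : 0 < 1 + Real.exp (-b) := by positivity
  have h2 : Real.exp (-b) ≤ Real.exp (-a) := Real.exp_le_exp.2 (by linarith)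
  exact inv_anti₀ h1 (by linarith)

lemma logloss_eq (t : ℝ) : logloss t = -Real.log (sg t) := by
  unfold logloss sg
  rw [Real.log_inv]; ring

lemma one_sub_sg (t : ℝ) : 1 - sg t = Real.exp (-t) * sg t := by
  unfold sg
  have h1 : 1 + Real.exp (-t) ≠ 0 := by positivity
  field_simp
  ring

lemma logloss_neg_eq (t : ℝ) : logloss (-t) = -Real.log (1 - sg t) := by
  have h : logloss (-t) = t + logloss t := by
    unfold logloss
    rw [neg_neg]
    have : 1 + Real.exp t = Real.exp t * (1 + Real.exp (-t)) := by
      rw [mul_add, mul_one, ← Real.exp_add]; simp [add_comm]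
    rw [this, Real.log_mul (Real.exp_ne_zero _) (by positivity), Real.log_exp]
  rw [h, one_sub_sg, Real.log_mul (Real.exp_ne_zero _) (ne_of_gt (sg_pos t)),
    Real.log_exp, logloss_eq]
  ring

lemma logloss_lip' {a b : ℝ} (h : a ≤ b) :
    0 ≤ logloss a - logloss b ∧ logloss a - logloss b ≤ b - a := by
  unfold logloss
  have h1 : 0 < 1 + Real.exp (-a) := by positivity
  have h2 : 0 < 1 + Real.exp (-b) := by positivity
  have h3 : Real.exp (-b) ≤ Real.exp (-a) := Real.exp_le_exp.2 (by linarith)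
  constructor
  · have := Real.log_le_log h2 (by linarith : 1 + Real.exp (-b) ≤ 1 + Real.exp (-a))
    linarith
  · have key : 1 + Real.exp (-a) ≤ Real.exp (b - a) * (1 + Real.exp (-b)) := by
      have e1 : Real.exp (b - a) * Real.exp (-b) = Real.exp (-a) := by
        rw [← Real.exp_add]; ring_nf
      have e2 : (1:ℝ) ≤ Real.exp (b - a) := Real.one_le_exp (by linarith)
      nlinarith [Real.exp_pos (-b)]
    have := Real.log_le_log h1 key
    rw [Real.log_mul (Real.exp_ne_zero _) (ne_of_gt h2), Real.log_exp] at this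
    linarith

lemma logloss_lip (a b : ℝ) : |logloss a - logloss b| ≤ |a - b| := by
  rcases le_total a b with h | h
  · obtain ⟨h1, h2⟩ := logloss_lip' h
    rw [abs_of_nonneg h1]
    calc logloss a - logloss b ≤ b - a := h2
      _ ≤ |a - b| := by rw [abs_sub_comm]; exact le_abs_self _
  · obtain ⟨h1, h2⟩ := logloss_lip' h
    rw [abs_sub_comm, abs_of_nonneg h1]
    exact h2.trans (le_abs_self _)

lemma core {p q δ : ℝ} (hp0 : 0 ≤ p) (hq : 0 < q) (hpq : |p - q| ≤ δ) :
    p * |Real.log p - Real.log q| ≤ δ + δ ^ 2 / q := by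
  have hδ : 0 ≤ δ := le_trans (abs_nonneg _) hpq
  have hδq : 0 ≤ δ ^ 2 / q := by positivity
  rcases eq_or_lt_of_le hp0 with h0 | hp
  · simp [← h0]; positivity
  rcases le_total p q with h | h
  · -- p ≤ q : p * (log q - log p) ≤ q - p ≤ δ
    have hlog : Real.log p ≤ Real.log q := Real.log_le_log hp h
    rw [abs_of_nonpos (by linarith)]
    have hd : Real.log q - Real.log p = Real.log (q / p) := (Real.log_div (ne_of_gt hq) (ne_of_gt hp)).symm
    have hb : Real.log (q / p) ≤ q / p - 1 := Real.log_le_sub_one_of_pos (by positivity)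
    have : p * (q / p - 1) = q - p := by field_simp
    nlinarith [abs_le.1 hpq]
  · have hlog : Real.log q ≤ Real.log p := Real.log_le_log hq h
    rw [abs_of_nonneg (by linarith)]
    have hd : Real.log p - Real.log q = Real.log (p / q) := (Real.log_div (ne_of_gt hp) (ne_of_gt hq)).symm
    have hb : Real.log (p / q) ≤ p / q - 1 := Real.log_le_sub_one_of_pos (by positivity)
    have h2 : p / q - 1 = (p - q) / q := by field_simp
    have h3 : p * ((p - q)/q) ≤ (q + δ) * (δ / q) := by
      have hpd : p ≤ q + δ := by nlinarith [abs_le.1 hpq]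
      have hd2 : (p - q)/q ≤ δ/q := by
        gcongr
        exact (abs_le.1 hpq).2
      calc p * ((p - q)/q) ≤ (q + δ) * ((p-q)/q) := by
            apply mul_le_mul_of_nonneg_right hpd
            have : 0 ≤ p - q := by linarith
            positivity
        _ ≤ (q + δ) * (δ/q) := by
            apply mul_le_mul_of_nonneg_left hd2; linarith
    have h4 : (q + δ) * (δ / q) = δ + δ ^ 2 / q := by field_simp
    calc p * (Real.log p - Real.log q) = p * Real.log (p/q) := by rw [hd]
      _ ≤ p * (p/q - 1) := by apply mul_le_mul_of_nonneg_left hb (le_of_lt hp)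
      _ = p * ((p-q)/q) := by rw [h2]
      _ ≤ δ + δ^2/q := by rw [← h4]; exact h3



def v (K k : ℕ) : ℝ := Real.log ((k : ℝ) / ((K : ℝ) - (k : ℝ)))

def sl (K k : ℕ) : ℝ := (K : ℝ) * (v K (k+1) - v K k)

def W1 (K : ℕ) (i : ℕ) : ℝ :=
  if i = 0 then v K 1
  else if i ≤ K - 2 then sl K i
  else if i ≤ 2 * K - 4 then -sl K (i - (K - 2))
  else 0

def Wa (K : ℕ) (i : ℕ) : ℝ := if 1 ≤ i ∧ i ≤ 2 * K - 4 then 1 else 0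

def Wb (K : ℕ) (i : ℕ) : ℝ :=
  if i ≤ K - 2 then -((i : ℝ) / K)
  else if i ≤ 2 * K - 4 then -(((i - (K - 2) + 1 : ℕ) : ℝ) / K)
  else 0

def R (K k : ℕ) (z : ℝ) : ℝ := max 0 (z - (k : ℝ)/K) - max 0 (z - ((k : ℝ)+1)/K)

def F (K : ℕ) (z : ℝ) : ℝ := v K 1 + ∑ k ∈ Icc 1 (K - 2), sl K k * R K k z

lemma vdiff {K : ℕ} (hK : 6 ≤ K) {k : ℕ} (h1 : 1 ≤ k) (h2 : k ≤ K - 2) :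
    0 ≤ v K (k+1) - v K k ∧ v K (k+1) - v K k ≤ 1 := by
  have hKr : (6 : ℝ) ≤ (K : ℝ) := by exact_mod_cast hK
  have ha1 : (1 : ℝ) ≤ (k : ℝ) := by exact_mod_cast h1
  have ha2 : (k : ℝ) + 2 ≤ (K : ℝ) := by exact_mod_cast (by omega : k + 2 ≤ K)
  set a := (k : ℝ) with hadef
  set c := (K : ℝ) with hcdef
  have hp1 : 0 < a := by linarith
  have hp2 : 0 < c - a := by linarith
  have hp3 : 0 < a + 1 := by linarith
  have hp4 : 0 < c - (a+1) := by linarith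
  have hcast : v K (k+1) = Real.log ((a+1) / (c - (a+1))) := by
    unfold v; push_cast; ring_nf; rw [hadef, hcdef]
  have hv : v K (k+1) - v K k
      = Real.log ((a+1)*(c-a)) - Real.log (a*(c-(a+1))) := by
    rw [hcast]
    unfold v
    rw [Real.log_div (by linarith) (by linarith), Real.log_div (by linarith) (by linarith),
      Real.log_mul (by linarith) (by linarith), Real.log_mul (by linarith) (by linarith)]
    ring
  set A := (a+1)*(c-a) with hA
  set B := a*(c-(a+1)) with hB
  have hBpos : 0 < B := by positivity
  have hApos : 0 < A := by positivity
  have hAB : A = B + c := by rw [hA, hB]; ring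
  have hBc : c - 2 ≤ B := by nlinarith [mul_nonneg (by linarith : (0:ℝ) ≤ a - 1) (by linarith : (0:ℝ) ≤ c - 2 - a)]
  constructor
  · rw [hv]
    have := Real.log_le_log hBpos (by linarith : B ≤ A)
    linarith
  · rw [hv]
    have hA52 : A ≤ (5/2) * B := by nlinarith
    have h1 : Real.log A ≤ Real.log ((5/2) * B) := Real.log_le_log hApos hA52
    rw [Real.log_mul (by norm_num) (ne_of_gt hBpos)] at h1
    have h2 : Real.log (5/2) ≤ 1 := by
      have := Real.log_le_log (by norm_num : (0:ℝ) < 5/2)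
        (by linarith [Real.exp_one_gt_d9] : (5/2 : ℝ) ≤ Real.exp 1)
      rwa [Real.log_exp] at this
    linarith

lemma sl_nonneg {K : ℕ} (hK : 6 ≤ K) {k : ℕ} (h1 : 1 ≤ k) (h2 : k ≤ K - 2) :
    0 ≤ sl K k := by
  have := (vdiff hK h1 h2).1
  have hKr : (0 : ℝ) ≤ (K : ℝ) := by positivity
  exact mul_nonneg hKr this

lemma sl_le {K : ℕ} (hK : 6 ≤ K) {k : ℕ} (h1 : 1 ≤ k) (h2 : k ≤ K - 2) :
    sl K k ≤ K := by
  have := (vdiff hK h1 h2).2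
  have hKr : (0 : ℝ) ≤ (K : ℝ) := by positivity
  calc sl K k = (K:ℝ) * (v K (k+1) - v K k) := rfl
    _ ≤ (K:ℝ) * 1 := by apply mul_le_mul_of_nonneg_left this hKr
    _ = K := mul_one _

lemma sl_mul {K : ℕ} (hK : 6 ≤ K) (k : ℕ) : sl K k * (1/(K:ℝ)) = v K (k+1) - v K k := by
  have hKne : (K:ℝ) ≠ 0 := by
    have : (0:ℝ) < (K:ℝ) := by exact_mod_cast (by omega : 0 < K)
    linarith
  unfold sl
  field_simp

lemma vtel (K : ℕ) (j : ℕ) : ∑ k ∈ Icc 1 j, (v K (k+1) - v K k) = v K (j+1) - v K 1 := by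
  induction j with
  | zero => simp
  | succ n ih => rw [Finset.sum_Icc_succ_top (by omega), ih]; ring


lemma Kpos {K : ℕ} (hK : 6 ≤ K) : (0:ℝ) < (K:ℝ) := by exact_mod_cast (by omega : 0 < K)

lemma max0_le_abs (a : ℝ) : |max 0 a| ≤ |a| := by
  rw [abs_of_nonneg (le_max_left 0 a)]
  exact max_le (abs_nonneg a) (le_abs_self a)

lemma max0_lip (a b : ℝ) : |max 0 a - max 0 b| ≤ |a - b| := by
  rw [max_comm 0 a, max_comm 0 b]
  exact abs_max_sub_max_le_abs a b 0

lemma R_nonneg {K : ℕ} (hK : 6 ≤ K) (k : ℕ) (z : ℝ) : 0 ≤ R K k z := by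
  have hKp := Kpos hK
  unfold R
  have h : z - ((k:ℝ)+1)/K ≤ z - (k:ℝ)/K := by
    have : (k:ℝ)/K ≤ ((k:ℝ)+1)/K := by gcongr; linarith
    linarith
  have := max_le_max (le_refl (0:ℝ)) h
  linarith [this]

lemma R_le {K : ℕ} (hK : 6 ≤ K) (k : ℕ) (z : ℝ) : R K k z ≤ 1/(K:ℝ) := by
  have hKp := Kpos hK
  unfold R
  have h : z - (k:ℝ)/K = (z - ((k:ℝ)+1)/K) + 1/K := by field_simp; ring
  rw [h]
  have : max 0 ((z - ((k:ℝ)+1)/K) + 1/K) ≤ max 0 (z - ((k:ℝ)+1)/K) + 1/K := by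
    apply max_le
    · have : (0:ℝ) ≤ 1/(K:ℝ) := by positivity
      have h2 := le_max_left (0:ℝ) (z - ((k:ℝ)+1)/K)
      linarith
    · have h2 := le_max_right (0:ℝ) (z - ((k:ℝ)+1)/K)
      linarith
  linarith

lemma R_eq_zero {K : ℕ} (hK : 6 ≤ K) {k : ℕ} {z : ℝ} (hz : z ≤ (k:ℝ)/K) : R K k z = 0 := by
  have hKp := Kpos hK
  have h1 : z - (k:ℝ)/K ≤ 0 := by linarith
  have h2 : z - ((k:ℝ)+1)/K ≤ 0 := by
    have : (k:ℝ)/K ≤ ((k:ℝ)+1)/K := by gcongr <;> linarith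
    linarith
  unfold R
  rw [max_eq_left h1, max_eq_left h2, sub_zero]

lemma R_eq_full {K : ℕ} (hK : 6 ≤ K) {k : ℕ} {z : ℝ} (hz : ((k:ℝ)+1)/K ≤ z) :
    R K k z = 1/(K:ℝ) := by
  have hKp := Kpos hK
  have h2 : 0 ≤ z - ((k:ℝ)+1)/K := by linarith
  have h1 : 0 ≤ z - (k:ℝ)/K := by
    have : (k:ℝ)/K ≤ ((k:ℝ)+1)/K := by gcongr <;> linarith
    linarith
  unfold R
  rw [max_eq_right h1, max_eq_right h2]
  field_simp
  ring


lemma eval {K : ℕ} (hK : 6 ≤ K) (z : ℝ) :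
    shallowEval (3 * K + 9) (W1 K) (Wa K) (Wb K) z = F K z := by
  unfold shallowEval F
  have e0 : W1 K 0 = v K 1 := by simp [W1]
  rw [e0]
  congr 1
  rw [show (1 : ℕ) = 0 + 1 from rfl, Finset.Icc_add_one_left_eq_Ioc]
  have s1 : K - 2 ≤ 2*K - 4 := by omega
  have s2 : 2*K - 4 ≤ 3*K + 9 := by omega
  rw [← Finset.sum_Ioc_consecutive _ (by omega : 0 ≤ 2*K-4) s2,
      ← Finset.sum_Ioc_consecutive _ (by omega : 0 ≤ K - 2) s1]
  have h3 : ∑ i ∈ Finset.Ioc (2*K-4) (3*K+9), W1 K i * max 0 (Wa K i * z + Wb K i) = 0 := by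
    apply Finset.sum_eq_zero
    intro i hi
    simp only [Finset.mem_Ioc] at hi
    have h : W1 K i = 0 := by
      unfold W1
      rw [if_neg (by omega), if_neg (by omega), if_neg (by omega)]
    rw [h, zero_mul]
  rw [h3, add_zero]
  have h1b : ∑ i ∈ Finset.Ioc 0 (K-2), W1 K i * max 0 (Wa K i * z + Wb K i)
      = ∑ k ∈ Finset.Ioc 0 (K-2), sl K k * max 0 (z - (k:ℝ)/K) := by
    apply Finset.sum_congr rfl
    intro i hi
    simp only [Finset.mem_Ioc] at hi
    have hW1 : W1 K i = sl K i := by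
      unfold W1; rw [if_neg (by omega), if_pos (by omega)]
    have hWa : Wa K i = 1 := by unfold Wa; rw [if_pos (by omega)]
    have hWb : Wb K i = -((i:ℝ)/K) := by unfold Wb; rw [if_pos (by omega)]
    rw [hW1, hWa, hWb, one_mul, sub_eq_add_neg]
  have h2b : ∑ i ∈ Finset.Ioc (K-2) (2*K-4), W1 K i * max 0 (Wa K i * z + Wb K i)
      = ∑ k ∈ Finset.Ioc 0 (K-2), (-sl K k) * max 0 (z - ((k:ℝ)+1)/K) := by
    have hkk : 2*K - 4 = (K-2) + (K-2) := by omega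
    rw [hkk]
    rw [show Finset.Ioc (K-2) ((K-2)+(K-2)) = Finset.map (addLeftEmbedding (K-2)) (Finset.Ioc 0 (K-2)) by
      rw [Finset.map_add_left_Ioc]; simp]
    rw [Finset.sum_map]
    apply Finset.sum_congr rfl
    intro k hk
    simp only [Finset.mem_Ioc] at hk
    have hke : addLeftEmbedding (K-2) k = (K-2) + k := rfl
    rw [hke]
    have hW1 : W1 K ((K-2)+k) = -sl K k := by
      unfold W1
      rw [if_neg (by omega), if_neg (by omega), if_pos (by omega)]
      congr 2
      omega
    have hWa : Wa K ((K-2)+k) = 1 := by unfold Wa; rw [if_pos (by omega)]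
    have hWb : Wb K ((K-2)+k) = -(((k+1 : ℕ) : ℝ)/K) := by
      unfold Wb
      rw [if_neg (by omega), if_pos (by omega)]
      congr 3
      omega
    rw [hW1, hWa, hWb, one_mul]
    congr 1
    push_cast
    ring
  rw [h1b, h2b, ← Finset.sum_add_distrib, Finset.Icc_add_one_left_eq_Ioc]
  apply Finset.sum_congr rfl
  intro k hk
  unfold R
  ring


lemma vtelI (K : ℕ) (j : ℕ) :
    ∑ k ∈ Finset.Ioc 0 j, (v K (k+1) - v K k) = v K (j+1) - v K 1 := by
  induction j with
  | zero => simp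
  | succ n ih => rw [Finset.sum_Ioc_succ_top (by omega), ih]; ring

lemma term_le {K : ℕ} (hK : 6 ≤ K) {k : ℕ} (h1 : 1 ≤ k) (h2 : k ≤ K - 2) (z : ℝ) :
    sl K k * R K k z ≤ v K (k+1) - v K k := by
  have := mul_le_mul_of_nonneg_left (R_le hK k z) (sl_nonneg hK h1 h2)
  rw [sl_mul hK] at this
  exact this

lemma F_ge_bot {K : ℕ} (hK : 6 ≤ K) (z : ℝ) : v K 1 ≤ F K z := by
  unfold F
  have : (0:ℝ) ≤ ∑ k ∈ Icc 1 (K - 2), sl K k * R K k z := by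
    apply Finset.sum_nonneg
    intro k hk
    simp only [Finset.mem_Icc] at hk
    exact mul_nonneg (sl_nonneg hK hk.1 hk.2) (R_nonneg hK k z)
  linarith

lemma F_le_top {K : ℕ} (hK : 6 ≤ K) (z : ℝ) : F K z ≤ v K (K-1) := by
  unfold F
  have h : ∑ k ∈ Icc 1 (K - 2), sl K k * R K k z
      ≤ ∑ k ∈ Icc 1 (K - 2), (v K (k+1) - v K k) := by
    apply Finset.sum_le_sum
    intro k hk
    simp only [Finset.mem_Icc] at hk
    exact term_le hK hk.1 hk.2 z
  rw [vtel] at h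
  have : K - 2 + 1 = K - 1 := by omega
  rw [this] at h
  linarith

lemma F_le {K : ℕ} (hK : 6 ≤ K) {j : ℕ} (hj : j ≤ K - 2) {z : ℝ}
    (hz : z ≤ ((j:ℝ)+1)/K) : F K z ≤ v K (j+1) := by
  have hKp := Kpos hK
  unfold F
  rw [show (1 : ℕ) = 0 + 1 from rfl, Finset.Icc_add_one_left_eq_Ioc,
    ← Finset.sum_Ioc_consecutive _ (by omega : 0 ≤ j) hj]
  have h2 : ∑ k ∈ Finset.Ioc j (K-2), sl K k * R K k z = 0 := by
    apply Finset.sum_eq_zero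
    intro k hk
    simp only [Finset.mem_Ioc] at hk
    have hz2 : z ≤ (k:ℝ)/K := by
      have hcast : (j:ℝ) + 1 ≤ (k:ℝ) := by exact_mod_cast (by omega : j + 1 ≤ k)
      have : ((j:ℝ)+1)/K ≤ (k:ℝ)/K := by gcongr
      linarith
    rw [R_eq_zero hK hz2, mul_zero]
  rw [h2, add_zero]
  have h1 : ∑ k ∈ Finset.Ioc 0 j, sl K k * R K k z
      ≤ ∑ k ∈ Finset.Ioc 0 j, (v K (k+1) - v K k) := by
    apply Finset.sum_le_sum
    intro k hk
    simp only [Finset.mem_Ioc] at hk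
    exact term_le hK hk.1 (by omega) z
  rw [vtelI] at h1
  linarith

lemma F_ge {K : ℕ} (hK : 6 ≤ K) {j : ℕ} (h1 : 1 ≤ j) (hj : j ≤ K - 1) {z : ℝ}
    (hz : (j:ℝ)/K ≤ z) : v K j ≤ F K z := by
  have hKp := Kpos hK
  obtain ⟨j', rfl⟩ : ∃ j', j = j' + 1 := ⟨j - 1, by omega⟩
  unfold F
  rw [show (1 : ℕ) = 0 + 1 from rfl, Finset.Icc_add_one_left_eq_Ioc,
    ← Finset.sum_Ioc_consecutive _ (by omega : 0 ≤ j') (by omega : j' ≤ K - 2)]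
  have h2 : (0:ℝ) ≤ ∑ k ∈ Finset.Ioc j' (K-2), sl K k * R K k z := by
    apply Finset.sum_nonneg
    intro k hk
    simp only [Finset.mem_Ioc] at hk
    exact mul_nonneg (sl_nonneg hK (by omega) hk.2) (R_nonneg hK k z)
  have h1b : ∑ k ∈ Finset.Ioc 0 j', sl K k * R K k z
      = ∑ k ∈ Finset.Ioc 0 j', (v K (k+1) - v K k) := by
    apply Finset.sum_congr rfl
    intro k hk
    simp only [Finset.mem_Ioc] at hk
    have hfull : ((k:ℝ)+1)/K ≤ z := by
      have hcast : (k:ℝ) + 1 ≤ (j':ℝ) + 1 := by exact_mod_cast (by omega : k + 1 ≤ j' + 1)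
      have : ((k:ℝ)+1)/K ≤ ((j':ℝ)+1)/K := by gcongr
      have hc2 : ((j' + 1 : ℕ):ℝ) = (j':ℝ) + 1 := by push_cast; ring
      rw [hc2] at hz
      linarith
    rw [R_eq_full hK hfull, sl_mul hK]
  rw [h1b, vtelI]
  linarith


lemma sg_v {K : ℕ} (hK : 6 ≤ K) {k : ℕ} (h1 : 1 ≤ k) (h2 : k ≤ K - 1) :
    sg (v K k) = (k:ℝ)/K := by
  have hKp := Kpos hK
  have ha : (1:ℝ) ≤ (k:ℝ) := by exact_mod_cast h1
  have hb : (k:ℝ) + 1 ≤ (K:ℝ) := by exact_mod_cast (by omega : k + 1 ≤ K)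
  have hx : (0:ℝ) < (k:ℝ)/((K:ℝ) - (k:ℝ)) := by
    apply div_pos (by linarith) (by linarith)
  unfold sg v
  rw [Real.exp_neg, Real.exp_log hx, inv_div]
  have h3 : 1 + ((K:ℝ) - (k:ℝ))/(k:ℝ) = (K:ℝ)/(k:ℝ) := by
    field_simp
    ring
  rw [h3, inv_div]

def clipf (K : ℕ) (z : ℝ) : ℝ := max (1/(K:ℝ)) (min z (((K:ℝ)-1)/K))

lemma clip_close {K : ℕ} (hK : 6 ≤ K) {p z ε : ℝ} (hp0 : 0 ≤ p) (hp1 : p ≤ 1)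
    (hzp : |z - p| ≤ ε) : |clipf K z - p| ≤ 1/(K:ℝ) + ε := by
  have hKp := Kpos hK
  have hε : 0 ≤ ε := le_trans (abs_nonneg _) hzp
  have hz := abs_le.1 hzp
  have hKK : ((K:ℝ)-1)/K = 1 - 1/K := by field_simp
  rw [abs_le]
  constructor
  · have hmin : p - ε - 1/K ≤ min z (((K:ℝ)-1)/K) := by
      apply le_min
      · have h0 : (0:ℝ) < 1/(K:ℝ) := by positivity
        linarith [hz.1]
      · rw [hKK]
        have : 0 < 1/(K:ℝ) := by positivity
        linarith
    have h2 := le_max_right (1/(K:ℝ)) (min z (((K:ℝ)-1)/K))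
    unfold clipf
    linarith
  · unfold clipf
    have h1 : 1/(K:ℝ) ≤ p + (1/K + ε) := by
      have : 0 ≤ (1:ℝ)/K := by positivity
      linarith
    have h2 : min z (((K:ℝ)-1)/K) ≤ p + (1/K + ε) := by
      have : min z (((K:ℝ)-1)/K) ≤ z := min_le_left _ _
      have h3 : 0 < 1/(K:ℝ) := by positivity
      linarith [hz.2]
    have := max_le h1 h2
    linarith

lemma cell {K : ℕ} (hK : 6 ≤ K) (z : ℝ) :
    ∃ j : ℕ, 1 ≤ j ∧ j ≤ K - 2 ∧ v K j ≤ F K z ∧ F K z ≤ v K (j+1) ∧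
      (j:ℝ)/K ≤ clipf K z ∧ clipf K z ≤ ((j:ℝ)+1)/K := by
  have hKp := Kpos hK
  have hKr : (6:ℝ) ≤ (K:ℝ) := by exact_mod_cast hK
  by_cases hz1 : z ≤ 2/K
  · refine ⟨1, le_refl _, by omega, ?_, ?_, ?_, ?_⟩
    · exact F_ge_bot hK z
    · exact F_le hK (by omega) (by push_cast; linarith)
    · push_cast
      exact le_max_left _ _
    · push_cast
      apply max_le
      · gcongr <;> linarith
      · have := min_le_left z (((K:ℝ)-1)/K)
        linarith
  · by_cases hz2 : ((K:ℝ)-2)/K ≤ z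
    · refine ⟨K-2, by omega, le_refl _, ?_, ?_, ?_, ?_⟩
      · apply F_ge hK (by omega) (by omega)
        have hc : ((K-2:ℕ):ℝ) = (K:ℝ) - 2 := by
          push_cast [Nat.cast_sub (by omega : 2 ≤ K)]; ring
        rw [hc]; exact hz2
      · have hc : K - 2 + 1 = K - 1 := by omega
        rw [hc]; exact F_le_top hK z
      · have hc : ((K-2:ℕ):ℝ) = (K:ℝ) - 2 := by
          push_cast [Nat.cast_sub (by omega : 2 ≤ K)]; ring
        rw [hc]
        unfold clipf
        have h1 : ((K:ℝ)-2)/K ≤ min z (((K:ℝ)-1)/K) := by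
          apply le_min hz2
          gcongr <;> linarith
        have := le_max_right (1/(K:ℝ)) (min z (((K:ℝ)-1)/K))
        linarith
      · have hc : ((K-2:ℕ):ℝ) + 1 = (K:ℝ) - 1 := by
          push_cast [Nat.cast_sub (by omega : 2 ≤ K)]; ring
        rw [hc]
        unfold clipf
        apply max_le
        · rw [div_le_div_iff₀ hKp hKp]; nlinarith
        · exact min_le_right _ _
    · push_neg at hz1 hz2
      have hz0 : 0 < z := by
        have : (0:ℝ) < 2/K := by positivity
        linarith
      have hzK0 : 0 ≤ z * K := by positivity
      set j := ⌊z * K⌋₊ with hjdef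
      have hj2 : 2 ≤ j := by
        apply Nat.le_floor
        rw [div_lt_iff₀ hKp] at hz1
        push_cast
        linarith
      have hjle : (j:ℝ) ≤ z * K := Nat.floor_le hzK0
      have hjlt : z * K < (j:ℝ) + 1 := Nat.lt_floor_add_one _
      have hjK : j ≤ K - 3 := by
        have h1 : z * K < (K:ℝ) - 2 := by
          have := (lt_div_iff₀ hKp).1 hz2
          linarith
        have h2 : j < K - 2 := by
          apply Nat.floor_lt hzK0 |>.2
          have hc : ((K-2:ℕ):ℝ) = (K:ℝ) - 2 := by
            push_cast [Nat.cast_sub (by omega : 2 ≤ K)]; ring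
          rw [hc]
          exact h1
        omega
      have hjz : (j:ℝ)/K ≤ z := by rw [div_le_iff₀ hKp]; linarith
      have hzj : z ≤ ((j:ℝ)+1)/K := by rw [le_div_iff₀ hKp]; linarith
      have hclip : clipf K z = z := by
        unfold clipf
        have h1 : z ≤ ((K:ℝ)-1)/K := by
          rw [le_div_iff₀ hKp]
          have := (lt_div_iff₀ hKp).1 hz2
          linarith
        have h2 : 1/(K:ℝ) ≤ z := by
          rw [div_le_iff₀ hKp]
          have := (div_lt_iff₀ hKp).1 hz1
          linarith
        rw [min_eq_left h1, max_eq_right h2]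
      refine ⟨j, by omega, by omega, F_ge hK (by omega) (by omega) hjz,
        F_le hK (by omega) hzj, ?_, ?_⟩
      · rw [hclip]; exact hjz
      · rw [hclip]; exact hzj

lemma W1_bound {K : ℕ} (hK : 6 ≤ K) (i : ℕ) : |W1 K i| ≤ (K:ℝ) := by
  have hKp := Kpos hK
  have hKr : (6:ℝ) ≤ (K:ℝ) := by exact_mod_cast hK
  unfold W1
  split_ifs with h0 h1 h2
  · have hc : ((1:ℕ):ℝ) = 1 := by norm_num
    unfold v
    rw [hc]
    have hK1 : (1:ℝ) < (K:ℝ) - 1 := by linarith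
    have hlog : Real.log (1/((K:ℝ)-1)) = -Real.log ((K:ℝ)-1) := by
      rw [one_div, Real.log_inv]
    rw [hlog, abs_neg, abs_of_nonneg (Real.log_nonneg (by linarith))]
    have := Real.log_le_sub_one_of_pos (by linarith : (0:ℝ) < (K:ℝ)-1)
    linarith
  · rw [abs_of_nonneg (sl_nonneg hK (by omega) h1)]
    exact sl_le hK (by omega) h1
  · rw [abs_neg, abs_of_nonneg (sl_nonneg hK (by omega) (by omega))]
    exact sl_le hK (by omega) (by omega)
  · simp

lemma Wa_bound (K : ℕ) (i : ℕ) : |Wa K i| ≤ 1 := by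
  unfold Wa
  split_ifs <;> simp

lemma Wb_bound {K : ℕ} (hK : 6 ≤ K) (i : ℕ) : |Wb K i| ≤ 1 := by
  have hKp := Kpos hK
  unfold Wb
  split_ifs with h1 h2
  · rw [abs_neg, abs_of_nonneg (by positivity)]
    rw [div_le_one hKp]
    exact_mod_cast (by omega : i ≤ K)
  · rw [abs_neg, abs_of_nonneg (by positivity)]
    rw [div_le_one hKp]
    exact_mod_cast (by omega : i - (K-2) + 1 ≤ K)
  · simp

lemma pert {K : ℕ} (hK : 6 ≤ K) {z εb : ℝ} (hz : |z| ≤ 2) (hεb0 : 0 ≤ εb) (hεb1 : εb ≤ 1)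
    {w1' wa' wb' : ℕ → ℝ}
    (h1 : ∀ i ∈ Finset.Icc 0 (3*K+9), |w1' i - W1 K i| ≤ εb)
    (h2 : ∀ i ∈ Finset.Icc 1 (3*K+9), |wa' i - Wa K i| ≤ εb ∧ |wb' i - Wb K i| ≤ εb) :
    |shallowEval (3*K+9) w1' wa' wb' z - F K z| ≤ 132 * (K:ℝ)^2 * εb := by
  have hKp := Kpos hK
  have hKr : (6:ℝ) ≤ (K:ℝ) := by exact_mod_cast hK
  have hzabs := abs_le.1 hz
  rw [← eval hK z]
  unfold shallowEval
  have key : ∀ i ∈ Finset.Icc 1 (3*K+9),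
      |w1' i * max 0 (wa' i * z + wb' i) - W1 K i * max 0 (Wa K i * z + Wb K i)|
        ≤ (3*(K:ℝ)+6) * εb := by
    intro i hi
    obtain ⟨ha, hb⟩ := h2 i hi
    have hw := h1 i (by simp only [Finset.mem_Icc] at hi ⊢; omega)
    have hWa := Wa_bound K i
    have hWb := Wb_bound hK i
    have hW1 := W1_bound hK i
    have hwa' : |wa' i| ≤ 2 := by
      have := abs_add_le (wa' i - Wa K i) (Wa K i)
      simp only [sub_add_cancel] at this
      linarith
    have hwb' : |wb' i| ≤ 2 := by
      have := abs_add_le (wb' i - Wb K i) (Wb K i)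
      simp only [sub_add_cancel] at this
      linarith
    have hA' : |wa' i * z + wb' i| ≤ 6 := by
      have t1 := abs_add_le (wa' i * z) (wb' i)
      rw [abs_mul] at t1
      nlinarith [abs_nonneg (wa' i), abs_nonneg z]
    have hdiff : |(wa' i * z + wb' i) - (Wa K i * z + Wb K i)| ≤ 3 * εb := by
      have e : (wa' i * z + wb' i) - (Wa K i * z + Wb K i)
          = (wa' i - Wa K i) * z + (wb' i - Wb K i) := by ring
      rw [e]
      have t1 := abs_add_le ((wa' i - Wa K i) * z) (wb' i - Wb K i)
      rw [abs_mul] at t1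
      nlinarith [abs_nonneg (wa' i - Wa K i), abs_nonneg z]
    have e2 : w1' i * max 0 (wa' i * z + wb' i) - W1 K i * max 0 (Wa K i * z + Wb K i)
        = (w1' i - W1 K i) * max 0 (wa' i * z + wb' i)
          + W1 K i * (max 0 (wa' i * z + wb' i) - max 0 (Wa K i * z + Wb K i)) := by ring
    rw [e2]
    have t2 := abs_add_le ((w1' i - W1 K i) * max 0 (wa' i * z + wb' i))
      (W1 K i * (max 0 (wa' i * z + wb' i) - max 0 (Wa K i * z + Wb K i)))
    rw [abs_mul, abs_mul] at t2
    have hm1 : |max 0 (wa' i * z + wb' i)| ≤ 6 := (max0_le_abs _).trans hA'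
    have hm2 : |max 0 (wa' i * z + wb' i) - max 0 (Wa K i * z + Wb K i)| ≤ 3 * εb :=
      (max0_lip _ _).trans hdiff
    have b1 : |w1' i - W1 K i| * |max 0 (wa' i * z + wb' i)| ≤ εb * 6 :=
      mul_le_mul hw hm1 (abs_nonneg _) hεb0
    have b2 : |W1 K i| * |max 0 (wa' i * z + wb' i) - max 0 (Wa K i * z + Wb K i)|
        ≤ (K:ℝ) * (3 * εb) :=
      mul_le_mul hW1 hm2 (abs_nonneg _) (by linarith)
    calc _ ≤ _ := t2
      _ ≤ εb * 6 + (K:ℝ) * (3*εb) := by linarith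
      _ = (3*(K:ℝ)+6) * εb := by ring
  have esplit : w1' 0 + (∑ i ∈ Finset.Icc 1 (3*K+9), w1' i * max 0 (wa' i * z + wb' i))
      - (W1 K 0 + ∑ i ∈ Finset.Icc 1 (3*K+9), W1 K i * max 0 (Wa K i * z + Wb K i))
      = (w1' 0 - W1 K 0) + ∑ i ∈ Finset.Icc 1 (3*K+9),
          (w1' i * max 0 (wa' i * z + wb' i) - W1 K i * max 0 (Wa K i * z + Wb K i)) := by
    rw [Finset.sum_sub_distrib]
    ring
  rw [esplit]
  have h0 := h1 0 (by simp)
  have hsum : |∑ i ∈ Finset.Icc 1 (3*K+9),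
      (w1' i * max 0 (wa' i * z + wb' i) - W1 K i * max 0 (Wa K i * z + Wb K i))|
      ≤ ((3*K+9:ℕ):ℝ) * ((3*(K:ℝ)+6) * εb) := by
    calc _ ≤ ∑ i ∈ Finset.Icc 1 (3*K+9),
        |w1' i * max 0 (wa' i * z + wb' i) - W1 K i * max 0 (Wa K i * z + Wb K i)| :=
          Finset.abs_sum_le_sum_abs _ _
      _ ≤ (Finset.Icc 1 (3*K+9)).card • ((3*(K:ℝ)+6) * εb) :=
          Finset.sum_le_card_nsmul _ _ _ key
      _ = ((3*K+9:ℕ):ℝ) * ((3*(K:ℝ)+6) * εb) := by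
          rw [Nat.card_Icc, nsmul_eq_mul]
          norm_num
  calc |(w1' 0 - W1 K 0) + ∑ i ∈ Finset.Icc 1 (3*K+9),
      (w1' i * max 0 (wa' i * z + wb' i) - W1 K i * max 0 (Wa K i * z + Wb K i))|
      ≤ εb + ((3*K+9:ℕ):ℝ) * ((3*(K:ℝ)+6) * εb) := by
        have := abs_add_le (w1' 0 - W1 K 0) (∑ i ∈ Finset.Icc 1 (3*K+9),
          (w1' i * max 0 (wa' i * z + wb' i) - W1 K i * max 0 (Wa K i * z + Wb K i)))
        linarith
    _ ≤ 132 * (K:ℝ)^2 * εb := by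
        push_cast
        nlinarith [sq_nonneg ((K:ℝ) - 6)]

lemma F_abs {K : ℕ} (hK : 6 ≤ K) (z : ℝ) : |F K z| ≤ Real.log K := by
  have hKp := Kpos hK
  have hKr : (6:ℝ) ≤ (K:ℝ) := by exact_mod_cast hK
  have hv1 : v K 1 = -Real.log ((K:ℝ)-1) := by
    unfold v
    norm_num [one_div, Real.log_inv]
  have hvK : v K (K-1) = Real.log ((K:ℝ)-1) := by
    unfold v
    have hc : ((K-1:ℕ):ℝ) = (K:ℝ) - 1 := by
      push_cast [Nat.cast_sub (by omega : 1 ≤ K)]; ring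
    rw [hc]
    have : (K:ℝ) - ((K:ℝ)-1) = 1 := by ring
    rw [this, div_one]
  have hle : Real.log ((K:ℝ)-1) ≤ Real.log K :=
    Real.log_le_log (by linarith) (by linarith)
  have h1 := F_ge_bot hK z
  have h2 := F_le_top hK z
  rw [hv1] at h1
  rw [hvK] at h2
  rw [abs_le]
  constructor <;> linarith

end S11

set_option maxHeartbeats 2000000 in
/-- `φ(f(m(x)))` for `f(z) = log (z/(1-z))` extended by continuity, as a real number:
`φ(f(z)) = -log z` for `z ∈ (0,1]`; the convention `0 · (… - φ(f(0))) = 0` (and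
symmetrically at `z = 1`) is built into the two error terms below. -/
theorem statement_11 :
    ∃ c₁₆ : ℝ, 0 < c₁₆ ∧
    ∀ (d₁ d₂ K : ℕ), 6 ≤ K →
    ∀ (m gbar : (ℕ → ℕ → ℝ) → ℝ), (∀ x, m x ∈ Set.Icc (0 : ℝ) 1) →
    ∀ ε : ℝ, 0 ≤ ε → ε ≤ 1 / K →
    (∀ x, cube d₁ d₂ x → |gbar x - m x| ≤ ε) →
    ∃ w1 wa wb : ℕ → ℝ,
      (∀ i ∈ Finset.Icc 0 (3 * K + 9), |w1 i| ≤ K) ∧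
      (∀ i ∈ Finset.Icc 1 (3 * K + 9), |wa i| ≤ K ∧ |wb i| ≤ K) ∧
      ∀ (εb : ℝ) (w1' wa' wb' : ℕ → ℝ), 0 ≤ εb → εb ≤ 1 →
        (∀ i ∈ Finset.Icc 0 (3 * K + 9), |w1' i - w1 i| ≤ εb) →
        (∀ i ∈ Finset.Icc 1 (3 * K + 9), |wa' i - wa i| ≤ εb ∧ |wb' i - wb i| ≤ εb) →
        (∀ x, cube d₁ d₂ x →
          |shallowEval (3 * K + 9) w1' wa' wb' (gbar x)| ≤ 132 * K ^ 2 * εb + Real.log K) ∧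
        ∀ x, cube d₁ d₂ x →
          |if m x = 0 then 0 else
              m x * (logloss (shallowEval (3 * K + 9) w1' wa' wb' (gbar x))
                - (-Real.log (m x)))| +
          |if m x = 1 then 0 else
              (1 - m x) * (logloss (-(shallowEval (3 * K + 9) w1' wa' wb' (gbar x)))
                - (-Real.log (1 - m x)))|
            ≤ c₁₆ * (Real.log K / K + ε) + 132 * K ^ 2 * εb := by
  refine ⟨20, by norm_num, ?_⟩
  intro d₁ d₂ K hK m gbar hm ε hε0 hε1 hga
  have hKr : (6:ℝ) ≤ (K:ℝ) := by exact_mod_cast hK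
  have hKp : (0:ℝ) < (K:ℝ) := by linarith
  have hK1 : (1:ℝ) ≤ (K:ℝ) := by linarith
  have hlogK : 1 ≤ Real.log K := by
    rw [Real.le_log_iff_exp_le hKp]
    linarith [Real.exp_one_lt_d9]
  have hKinv : 1/(K:ℝ) ≤ 1 := by rw [div_le_one hKp]; linarith
  refine ⟨S11.W1 K, S11.Wa K, S11.Wb K, ?_, ?_, ?_⟩
  · intro i _
    exact S11.W1_bound hK i
  · intro i _
    exact ⟨(S11.Wa_bound K i).trans hK1, (S11.Wb_bound hK i).trans hK1⟩
  intro εb w1' wa' wb' hεb0 hεb1 hw1 hwab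
  have key : ∀ x, cube d₁ d₂ x →
      |shallowEval (3*K+9) w1' wa' wb' (gbar x) - S11.F K (gbar x)| ≤ 132*(K:ℝ)^2*εb := by
    intro x hx
    apply S11.pert hK ?_ hεb0 hεb1 hw1 hwab
    have h := abs_le.1 (hga x hx)
    obtain ⟨hm0, hm1⟩ := hm x
    rw [abs_le]
    constructor <;> [nlinarith [h.1]; nlinarith [h.2]]
  constructor
  · intro x hx
    have hp := key x hx
    have hF := S11.F_abs hK (gbar x)
    have htri := abs_add_le (shallowEval (3*K+9) w1' wa' wb' (gbar x) - S11.F K (gbar x))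
      (S11.F K (gbar x))
    rw [sub_add_cancel] at htri
    linarith
  · intro x hx
    set p := m x with hpdef
    set z := gbar x with hzdef
    set t := shallowEval (3*K+9) w1' wa' wb' z with htdef
    obtain ⟨hp0, hp1⟩ := hm x
    rw [← hpdef] at hp0 hp1
    have hzp := hga x hx
    rw [← hzdef, ← hpdef] at hzp
    have hΔ := key x hx
    rw [← hzdef, ← htdef] at hΔ
    obtain ⟨j, hj1, hj2, hFl, hFu, hcl, hcu⟩ := S11.cell hK z
    set q := S11.sg (S11.F K z) with hqdef
    have hq0 : 0 < q := S11.sg_pos _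
    have hsgl : (j:ℝ)/K ≤ q := by
      rw [hqdef, ← S11.sg_v hK hj1 (by omega)]
      exact S11.sg_mono hFl
    have hsgu : q ≤ ((j:ℝ)+1)/K := by
      have h := S11.sg_mono hFu
      rw [S11.sg_v hK (by omega) (by omega)] at h
      rw [hqdef]
      have hc : ((j+1:ℕ):ℝ) = (j:ℝ)+1 := by push_cast; ring
      rw [hc] at h
      exact h
    have hj1r : (1:ℝ) ≤ (j:ℝ) := by exact_mod_cast hj1
    have hjKr : (j:ℝ) + 2 ≤ (K:ℝ) := by exact_mod_cast (by omega : j + 2 ≤ K)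
    have hqK : 1/(K:ℝ) ≤ q := by
      have : 1/(K:ℝ) ≤ (j:ℝ)/K := by gcongr
      linarith
    have hq1K : 1/(K:ℝ) ≤ 1 - q := by
      have h1 : q ≤ ((K:ℝ)-1)/K := by
        have : ((j:ℝ)+1)/K ≤ ((K:ℝ)-1)/K := by gcongr <;> linarith
        linarith
      have h2 : ((K:ℝ)-1)/K = 1 - 1/K := by field_simp
      linarith
    have hq1 : q < 1 := by
      have : (0:ℝ) < 1/K := by positivity
      linarith
    -- distance from p to q
    have hwidth : ((j:ℝ)+1)/K - (j:ℝ)/K = 1/K := by field_simp; ring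
    clear_value p z t q
    have hclip := S11.clip_close hK hp0 hp1 hzp
    have hclose : |p - q| ≤ 2/(K:ℝ) + ε := by
      have h1 : |q - S11.clipf K z| ≤ 1/K := by
        rw [abs_le]; constructor <;> linarith
      have h2K : 2/(K:ℝ) = 1/K + 1/K := by ring
      obtain ⟨h2a, h2b⟩ := abs_le.1 hclip
      obtain ⟨h1a, h1b⟩ := abs_le.1 h1
      rw [abs_le]
      constructor <;> linarith
    set δ := 2/(K:ℝ) + ε with hδdef
    have hδ0 : 0 ≤ δ := by positivity
    have hδK : δ * K ≤ 3 := by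
      have : ε * K ≤ 1 := by
        have := mul_le_mul_of_nonneg_right hε1 hKp.le
        rw [one_div, inv_mul_cancel₀ (ne_of_gt hKp)] at this
        linarith
      have h2 : (2/(K:ℝ)) * K = 2 := by field_simp
      rw [hδdef]
      nlinarith
    clear_value δ
    have hKq : 1 ≤ q * (K:ℝ) := (div_le_iff₀ hKp).1 hqK
    have hKq2 : 1 ≤ (1-q) * (K:ℝ) := (div_le_iff₀ hKp).1 hq1K
    have hb1 : δ^2/q ≤ 3*δ := by
      rw [div_le_iff₀ hq0]
      have hg1 : δ^2 * 1 ≤ δ^2 * (q*K) := mul_le_mul_of_nonneg_left hKq (sq_nonneg δ)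
      have hg3 : (δ*K)*(δ*q) ≤ 3*(δ*q) :=
        mul_le_mul_of_nonneg_right hδK (mul_nonneg hδ0 hq0.le)
      nlinarith
    have hb2 : δ^2/(1-q) ≤ 3*δ := by
      rw [div_le_iff₀ (by linarith : (0:ℝ) < 1 - q)]
      have hg1 : δ^2 * 1 ≤ δ^2 * ((1-q)*K) := mul_le_mul_of_nonneg_left hKq2 (sq_nonneg δ)
      have hg3 : (δ*K)*(δ*(1-q)) ≤ 3*(δ*(1-q)) :=
        mul_le_mul_of_nonneg_right hδK (mul_nonneg hδ0 (by linarith : (0:ℝ) ≤ 1-q))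
      nlinarith
    have core1 := S11.core hp0 hq0 hclose
    have core2 : (1-p) * |Real.log (1-p) - Real.log (1-q)| ≤ δ + δ^2/(1-q) := by
      apply S11.core (by linarith) (by linarith)
      have : (1-p) - (1-q) = -(p - q) := by ring
      rw [this, abs_neg]
      exact hclose
    have hlip1 : |logloss t - logloss (S11.F K z)| ≤ 132*(K:ℝ)^2*εb :=
      (S11.logloss_lip _ _).trans hΔ
    have hlip2 : |logloss (-t) - logloss (-(S11.F K z))| ≤ 132*(K:ℝ)^2*εb := by
      have h : (-t) - (-(S11.F K z)) = -(t - S11.F K z) := by ring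
      have := S11.logloss_lip (-t) (-(S11.F K z))
      rw [h, abs_neg] at this
      exact this.trans hΔ
    have heq1 : logloss (S11.F K z) = -Real.log q := by
      rw [hqdef]; exact S11.logloss_eq _
    have heq2 : logloss (-(S11.F K z)) = -Real.log (1 - q) := by
      rw [hqdef]; exact S11.logloss_neg_eq _
    have hterm1 : |if p = 0 then 0 else p * (logloss t - -Real.log p)|
        ≤ p * |Real.log p - Real.log q| + p * (132*(K:ℝ)^2*εb) := by
      split_ifs with h
      · simp only [abs_zero]
        have : (0:ℝ) ≤ p * |Real.log p - Real.log q| := by positivity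
        have h2 : (0:ℝ) ≤ p * (132*(K:ℝ)^2*εb) := by positivity
        linarith
      · rw [abs_mul, abs_of_nonneg hp0]
        have he : logloss t - -Real.log p
            = (logloss t - logloss (S11.F K z)) + (Real.log p - Real.log q) := by
          rw [heq1]; ring
        rw [he]
        have h1 := abs_add_le (logloss t - logloss (S11.F K z)) (Real.log p - Real.log q)
        have h2 := mul_le_mul_of_nonneg_left h1 hp0
        have h3 := mul_le_mul_of_nonneg_left hlip1 hp0
        nlinarith
    have hterm2 : |if p = 1 then 0 else (1-p) * (logloss (-t) - -Real.log (1-p))|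
        ≤ (1-p) * |Real.log (1-p) - Real.log (1-q)| + (1-p) * (132*(K:ℝ)^2*εb) := by
      split_ifs with h
      · simp only [abs_zero]
        have h1 : (0:ℝ) ≤ (1-p) * |Real.log (1-p) - Real.log (1-q)| := by
          apply mul_nonneg (by linarith) (abs_nonneg _)
        have h2 : (0:ℝ) ≤ (1-p) * (132*(K:ℝ)^2*εb) := by
          apply mul_nonneg (by linarith)
          positivity
        linarith
      · rw [abs_mul, abs_of_nonneg (by linarith : (0:ℝ) ≤ 1 - p)]
        have he : logloss (-t) - -Real.log (1-p)
            = (logloss (-t) - logloss (-(S11.F K z))) + (Real.log (1-p) - Real.log (1-q)) := by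
          rw [heq2]; ring
        rw [he]
        have h1 := abs_add_le (logloss (-t) - logloss (-(S11.F K z)))
          (Real.log (1-p) - Real.log (1-q))
        have h2 := mul_le_mul_of_nonneg_left h1 (by linarith : (0:ℝ) ≤ 1 - p)
        have h3 := mul_le_mul_of_nonneg_left hlip2 (by linarith : (0:ℝ) ≤ 1 - p)
        nlinarith
    have hsum : p * (132*(K:ℝ)^2*εb) + (1-p) * (132*(K:ℝ)^2*εb) = 132*(K:ℝ)^2*εb := by
      ring
    have h16 : 16/(K:ℝ) ≤ 20 * Real.log K / K := by
      gcongr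
      linarith
    calc |if p = 0 then 0 else p * (logloss t - -Real.log p)|
          + |if p = 1 then 0 else (1-p) * (logloss (-t) - -Real.log (1-p))|
        ≤ (δ + δ^2/q) + (δ + δ^2/(1-q)) + 132*(K:ℝ)^2*εb := by linarith
      _ ≤ 8*δ + 132*(K:ℝ)^2*εb := by linarith
      _ = 16/(K:ℝ) + 8*ε + 132*(K:ℝ)^2*εb := by rw [hδdef]; ring
      _ ≤ 20 * (Real.log K / K + ε) + 132*(K:ℝ)^2*εb := by
          have : 20 * (Real.log K / K + ε) = 20 * Real.log K / K + 20 * ε := by ring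
          linarith
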